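/- Suppose (w, b) together with multipliers α satisfies the soft margin KKT conditions at cost C > 0, and there exists at least one index i with α i = C (in particular if there is at least one slack vector). Then ‖w‖ ≥ C * G, where G is the two-class gap; equivalently the margin ρ = 1/‖w‖ satisfies ρ ≤ 1/(C * G). -/

import Mathlib

open scoped RealInnerProductSpace BigOperators

variable {E : Type*} [NormedAddCommGroup E] [InnerProductSpace ℝ E]

/-- The two-class gap: the infimum distance between the convex hulls of the two classes. -/
noncomputable def twoClassGap {n : ℕ} (x : Fin n → E) (y : Fin n → ℝ) : ℝ :=
  sInf {g : ℝ | ∃ cp ∈ convexHull ℝ (x '' {i | y i = 1}),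
    ∃ cm ∈ convexHull ℝ (x '' {i | y i = -1}), g = ‖cp - cm‖}

open Classical in
/-- The index set of the positive class. -/
noncomputable def posSet {n : ℕ} (y : Fin n → ℝ) : Finset (Fin n) :=
  Finset.univ.filter (fun i => y i = 1)

open Classical in
/-- The index set of the negative class. -/
noncomputable def negSet {n : ℕ} (y : Fin n → ℝ) : Finset (Fin n) :=
  Finset.univ.filter (fun i => y i = -1)

/-- The soft margin KKT conditions at cost `C` for `(w, b)` with multipliers `α`. -/
def SoftKKT {n : ℕ} (x : Fin n → E) (y : Fin n → ℝ) (C : ℝ) (w : E) (b : ℝ)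
    (α : Fin n → ℝ) : Prop :=
  (∀ i, 0 ≤ α i ∧ α i ≤ C) ∧
  w = (∑ i ∈ posSet y, α i • x i) - (∑ i ∈ negSet y, α i • x i) ∧
  (∑ i ∈ posSet y, α i) = (∑ i ∈ negSet y, α i) ∧
  (∀ i, α i < C → 1 ≤ y i * (⟪w, x i⟫ + b)) ∧
  (∀ i, y i * (⟪w, x i⟫ + b) < 1 → α i = C) ∧
  (∀ i, 0 < α i → y i * (⟪w, x i⟫ + b) ≤ 1)

theorem soft_margin_gap_bound {n : ℕ} (x : Fin n → E) (y : Fin n → ℝ)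
    (hy : ∀ i, y i = 1 ∨ y i = -1)
    (hpos : ∃ i, y i = 1) (hneg : ∃ i, y i = -1)
    (C : ℝ) (hC : 0 < C) (w : E) (b : ℝ) (α : Fin n → ℝ)
    (hkkt : SoftKKT x y C w b α)
    (hslack : ∃ i, α i = C) :
    C * twoClassGap x y ≤ ‖w‖ := by
  classical
  obtain ⟨hbound, hw, hsum, -, -, -⟩ := hkkt
  set S : ℝ := ∑ i ∈ posSet y, α i with hS
  -- S ≥ C
  obtain ⟨i₀, hi₀⟩ := hslack
  have hCS : C ≤ S := by
    rcases hy i₀ with h | h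
    · have hmem : i₀ ∈ posSet y := by simp [posSet, h]
      calc C = α i₀ := hi₀.symm
        _ ≤ S := Finset.single_le_sum (fun i _ => (hbound i).1) hmem
    · have hmem : i₀ ∈ negSet y := by simp [negSet, h]
      have : α i₀ ≤ ∑ i ∈ negSet y, α i :=
        Finset.single_le_sum (fun i _ => (hbound i).1) hmem
      rw [hsum]; exact hi₀ ▸ this
  have hSpos : 0 < S := lt_of_lt_of_le hC hCS
  have hS0 : S ≠ 0 := ne_of_gt hSpos
  -- centers of mass
  set cp : E := S⁻¹ • ∑ i ∈ posSet y, α i • x i with hcp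
  set cm : E := S⁻¹ • ∑ i ∈ negSet y, α i • x i with hcm
  have hcpmem : cp ∈ convexHull ℝ (x '' {i | y i = 1}) := by
    have := Finset.centerMass_mem_convexHull (t := posSet y) (w := α) (z := x)
      (fun i _ => (hbound i).1) hSpos
      (fun i hi => (Set.mem_image_of_mem x (by simpa [posSet] using hi) : x i ∈ x '' {i | y i = 1}))
    simpa [Finset.centerMass, hcp, hS] using this
  have hcmmem : cm ∈ convexHull ℝ (x '' {i | y i = -1}) := by
    have := Finset.centerMass_mem_convexHull (t := negSet y) (w := α) (z := x)
      (fun i _ => (hbound i).1) (by rw [← hsum]; exact hSpos)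
      (fun i hi => (Set.mem_image_of_mem x (by simpa [negSet] using hi) : x i ∈ x '' {i | y i = -1}))
    simpa [Finset.centerMass, hcm, ← hsum, hS] using this
  -- w = S • (cp - cm)
  have hweq : w = S • (cp - cm) := by
    rw [hw, smul_sub, hcp, hcm, smul_inv_smul₀ hS0, smul_inv_smul₀ hS0]
  have hnorm : ‖w‖ = S * ‖cp - cm‖ := by
    rw [hweq, norm_smul, Real.norm_eq_abs, abs_of_pos hSpos]
  -- gap bounds
  have hGle : twoClassGap x y ≤ ‖cp - cm‖ := by
    apply csInf_le
    · exact ⟨0, fun g hg => by obtain ⟨a, -, b', -, rfl⟩ := hg; positivity⟩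
    · exact ⟨cp, hcpmem, cm, hcmmem, rfl⟩
  have hGnonneg : 0 ≤ twoClassGap x y :=
    Real.sInf_nonneg (fun g hg => by obtain ⟨a, -, b', -, rfl⟩ := hg; positivity)
  calc C * twoClassGap x y ≤ S * twoClassGap x y := by
        apply mul_le_mul_of_nonneg_right hCS hGnonneg
    _ ≤ S * ‖cp - cm‖ := mul_le_mul_of_nonneg_left hGle (le_of_lt hSpos)
    _ = ‖w‖ := hnorm.symm
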